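/- Let G be a graph on n vertices with n not divisible by 3 that is 3-chromatic, and let k ≥ 3 and l ≥ 1. Then the graph G ∘^l C_{2k} admits no equitable 3-coloring; in fact, any proper 3-coloring of G ∘^l C_{2k} obtained from an equitable 3-coloring of G has two color classes whose cardinalities differ by (k−1)^l. -/

import Mathlib

open SimpleGraph Finset

/-- The corona `G ∘ H` of two graphs: one copy of `G` and `|V(G)|` copies of `H`,
the `i`-th vertex of `G` being joined to every vertex of the `i`-th copy of `H`. -/
def SimpleGraph.corona {α β : Type*} (G : SimpleGraph α) (H : SimpleGraph β) :
    SimpleGraph (α ⊕ α × β) where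
  Adj x y :=
    match x, y with
    | Sum.inl u, Sum.inl v => G.Adj u v
    | Sum.inl u, Sum.inr (v, _) => u = v
    | Sum.inr (u, _), Sum.inl v => u = v
    | Sum.inr (u, a), Sum.inr (v, b) => u = v ∧ H.Adj a b
  symm := ⟨by
    rintro (u | ⟨u, a⟩) (v | ⟨v, b⟩) h
    · exact h.symm
    · exact h.symm
    · exact h.symm
    · exact ⟨h.1.symm, h.2.symm⟩⟩
  loopless := ⟨by
    rintro (u | ⟨u, a⟩) h
    · exact G.loopless.irrefl u h
    · exact H.loopless.irrefl a h.2⟩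

universe u

/-- Vertex type of the `l`-fold corona `G ∘^l H` (with `l = 0` giving `G` itself). -/
def coronaType (α β : Type u) : ℕ → Type u
  | 0 => α
  | l + 1 => coronaType α β l ⊕ coronaType α β l × β

instance coronaType.fintype (α β : Type u) [Fintype α] [Fintype β] :
    ∀ l, Fintype (coronaType α β l)
  | 0 => inferInstanceAs (Fintype α)
  | l + 1 =>
    letI := coronaType.fintype α β l
    inferInstanceAs (Fintype (coronaType α β l ⊕ coronaType α β l × β))

/-- The `l`-fold corona `G ∘^l H`, defined by `G ∘^0 H = G` and
`G ∘^(l+1) H = (G ∘^l H) ∘ H`. -/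
def coronaPow {α β : Type u} (G : SimpleGraph α) (H : SimpleGraph β) :
    ∀ l, SimpleGraph (coronaType α β l)
  | 0 => G
  | l + 1 => (coronaPow G H l).corona H

/-- The canonical copy of a vertex of `G` inside `G ∘^l H`. -/
def coronaBase {α : Type u} (β : Type u) : ∀ l, α → coronaType α β l
  | 0 => id
  | l + 1 => fun a => Sum.inl (coronaBase β l a)

/-- `c` is an equitable `k`-coloring of `G`: it is proper and any two color classes
differ in size by at most one. -/
def SimpleGraph.IsEquitableColoring {V : Type*} [Fintype V] (G : SimpleGraph V) {k : ℕ}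
    (c : V → Fin k) : Prop :=
  (∀ ⦃u v⦄, G.Adj u v → c u ≠ c v) ∧
    ∀ i j : Fin k,
      (Finset.univ.filter fun v => c v = i).card ≤
        (Finset.univ.filter fun v => c v = j).card + 1

/-- `G` is equitably `k`-colorable. -/
def SimpleGraph.EquitablyColorable {V : Type*} [Fintype V] (G : SimpleGraph V) (k : ℕ) : Prop :=
  ∃ c : V → Fin k, G.IsEquitableColoring c

/-- The equitable chromatic number: the least `k` such that `G` is equitably `k`-colorable. -/
noncomputable def SimpleGraph.equitableChromaticNumber {V : Type*} [Fintype V]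
    (G : SimpleGraph V) : ℕ :=
  sInf {k | G.EquitablyColorable k}

/-- The maximum degree of a finite graph (no decidability assumptions). -/
noncomputable def SimpleGraph.maxDeg {V : Type*} [Fintype V] (G : SimpleGraph V) : ℕ :=
  Finset.univ.sup fun v => (G.neighborSet v).ncard


private lemma fin3_third : ∀ x y : Fin 3, x ≠ y → ∃ z : Fin 3, z ≠ x ∧ z ≠ y := by decide

private lemma fin3_mem : ∀ (x y z w : Fin 3), y ≠ x → z ≠ x → y ≠ z → w ≠ x → w = y ∨ w = z := by
  decide

private lemma cnt_eq {γ : Type*} [Fintype γ] (p : γ → Prop) [DecidablePred p] :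
    (Finset.univ.filter p).card = Nat.card {v // p v} := by
  rw [Nat.card_eq_fintype_card, Fintype.card_subtype]

private lemma cycle_count {k : ℕ} (hk : 3 ≤ k) (d : Fin (2*k) → Fin 3) (x : Fin 3)
    (hd : ∀ ⦃a b⦄, (cycleGraph (2*k)).Adj a b → d a ≠ d b)
    (hx : ∀ j, d j ≠ x) {y : Fin 3} (hy : y ≠ x) :
    (Finset.univ.filter fun j => d j = y).card = k := by
  haveI : NeZero (2*k) := ⟨by omega⟩
  obtain ⟨z, hzx, hzy⟩ := fin3_third x y (fun h => hy h.symm)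
  have adj : ∀ j : Fin (2*k), (cycleGraph (2*k)).Adj j (j+1) := by
    intro j
    rw [cycleGraph_adj']
    right
    have h1 : j + 1 - j = 1 := add_sub_cancel_left j 1
    rw [h1, Fin.val_one', Nat.mod_eq_of_lt (by omega)]
  have mem2 : ∀ j, d j = y ∨ d j = z :=
    fun j => fin3_mem x y z (d j) hy hzx (fun h => hzy h.symm) (hx j)
  have step : ∀ j : Fin (2*k), (d j = y → d (j+1) = z) ∧ (d j = z → d (j+1) = y) := by
    intro j
    have h1 := hd (adj j)
    have h2 := mem2 (j+1)
    constructor <;> intro h <;> rcases h2 with h2 | h2 <;> simp_all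
  have hbij : (univ.filter fun j => d j = y).card = (univ.filter fun j => d j = z).card := by
    apply Finset.card_bij (fun j _ => j + 1)
    · intro a ha
      simp only [mem_filter, mem_univ, true_and] at ha ⊢
      exact (step a).1 ha
    · intro a _ b _ h
      exact add_right_cancel h
    · intro b hb
      simp only [mem_filter, mem_univ, true_and] at hb ⊢
      refine ⟨b - 1, ?_, sub_add_cancel b 1⟩
      rcases mem2 (b - 1) with h | h
      · exact h
      · exfalso
        have h3 := (step (b-1)).2 h
        rw [sub_add_cancel] at h3
        rw [h3] at hb
        exact hzy hb.symm
  have hcover : (univ.filter fun j => d j = y).card + (univ.filter fun j => d j = z).card = 2*k := by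
    have hdisj : Disjoint (univ.filter fun j => d j = y) (univ.filter fun j => d j = z) := by
      rw [Finset.disjoint_filter]
      intro j _ h1 h2
      exact hzy (h1.symm.trans h2).symm
    have hunion : (univ.filter fun j => d j = y) ∪ (univ.filter fun j => d j = z) = univ := by
      ext j
      simp only [Finset.mem_union, mem_filter, mem_univ, true_and, iff_true]
      exact mem2 j
    calc (univ.filter fun j => d j = y).card + (univ.filter fun j => d j = z).card
        = ((univ.filter fun j => d j = y) ∪ (univ.filter fun j => d j = z)).card :=
          (Finset.card_union_of_disjoint hdisj).symm
      _ = (univ : Finset (Fin (2*k))).card := by rw [hunion]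
      _ = 2*k := by simp
  omega

private lemma corona_count {X : Type*} [Fintype X] {k : ℕ} (hk : 3 ≤ k)
    (Gx : SimpleGraph X) (c : X ⊕ X × Fin (2*k) → Fin 3)
    (hc : ∀ ⦃u v⦄, (Gx.corona (cycleGraph (2*k))).Adj u v → c u ≠ c v) (i : Fin 3) :
    Nat.card {v // c v = i}
      = Nat.card {x : X // c (Sum.inl x) = i}
        + k * (Fintype.card X - Nat.card {x : X // c (Sum.inl x) = i}) := by
  rw [← cnt_eq, ← cnt_eq]
  have inner : ∀ a : X, (univ.filter fun j : Fin (2*k) => c (Sum.inr (a, j)) = i).card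
      = if c (Sum.inl a) = i then 0 else k := by
    intro a
    split_ifs with h
    · rw [Finset.card_eq_zero, Finset.filter_eq_empty_iff]
      intro j _
      have h2 := hc (show (Gx.corona (cycleGraph (2*k))).Adj (Sum.inl a) (Sum.inr (a, j)) from rfl)
      rw [h] at h2
      exact fun hj => h2 hj.symm
    · exact cycle_count hk (fun j => c (Sum.inr (a, j))) (c (Sum.inl a))
        (fun u v huv => hc ⟨rfl, huv⟩)
        (fun j hj => hc (show (Gx.corona (cycleGraph (2*k))).Adj (Sum.inl a) (Sum.inr (a, j)) from rfl) hj.symm)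
        (fun he => h he.symm)
  have lhs : (univ.filter fun v : X ⊕ X × Fin (2*k) => c v = i).card
      = (univ.filter fun x : X => c (Sum.inl x) = i).card
        + ∑ a : X, (univ.filter fun j : Fin (2*k) => c (Sum.inr (a, j)) = i).card := by
    rw [Finset.card_filter, Fintype.sum_sum_type, ← Finset.card_filter]
    congr 1
    rw [Fintype.sum_prod_type]
    exact Finset.sum_congr rfl fun a _ => (Finset.card_filter _ _).symm
  rw [lhs]
  congr 1
  have hsplit := Finset.card_filter_add_card_filter_not
    (s := (univ : Finset X)) (p := fun x : X => c (Sum.inl x) = i)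
  rw [Finset.card_univ] at hsplit
  calc ∑ a : X, (univ.filter fun j : Fin (2*k) => c (Sum.inr (a, j)) = i).card
      = ∑ a : X, (if ¬ (c (Sum.inl a) = i) then k else 0) := by
        refine Finset.sum_congr rfl fun a _ => ?_
        rw [inner a]
        by_cases h : c (Sum.inl a) = i <;> simp [h]
    _ = ∑ a ∈ univ.filter (fun a : X => ¬ (c (Sum.inl a) = i)), k := by
        rw [Finset.sum_filter]
    _ = (univ.filter fun a : X => ¬ (c (Sum.inl a) = i)).card * k := by
        rw [Finset.sum_const, smul_eq_mul]
    _ = k * (Fintype.card X - (univ.filter fun x : X => c (Sum.inl x) = i).card) := by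
        have h2 : (univ.filter fun a : X => ¬ (c (Sum.inl a) = i)).card
            = Fintype.card X - (univ.filter fun x : X => c (Sum.inl x) = i).card := by omega
        rw [h2, mul_comm]

private lemma key_count {α : Type} [Fintype α] (G : SimpleGraph α) {k : ℕ} (hk : 3 ≤ k) :
    ∀ (l : ℕ) (c : coronaType α (Fin (2*k)) l → Fin 3),
      (∀ ⦃u v⦄, (coronaPow G (cycleGraph (2*k)) l).Adj u v → c u ≠ c v) →
      ∀ i j : Fin 3,
        (Nat.card {v // c v = i} : ℤ) - (Nat.card {v // c v = j} : ℤ)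
          = (1 - (k:ℤ))^l * ((Nat.card {a : α // c (coronaBase (Fin (2*k)) l a) = i} : ℤ)
              - (Nat.card {a : α // c (coronaBase (Fin (2*k)) l a) = j} : ℤ)) := by
  intro l
  induction l with
  | zero =>
    intro c hc i j
    simp only [pow_zero, one_mul]
    rfl
  | succ l ih =>
    intro c hc i j
    have hc' : ∀ ⦃u v⦄, (coronaPow G (cycleGraph (2*k)) l).Adj u v →
        c (Sum.inl u) ≠ c (Sum.inl v) := fun u v h =>
      hc (show (coronaPow G (cycleGraph (2*k)) (l+1)).Adj (Sum.inl u) (Sum.inl v) from h)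
    have ih' : (Nat.card {v : coronaType α (Fin (2*k)) l // c (Sum.inl v) = i} : ℤ)
          - (Nat.card {v : coronaType α (Fin (2*k)) l // c (Sum.inl v) = j} : ℤ)
        = (1 - (k:ℤ))^l
          * ((Nat.card {a : α // c (Sum.inl (coronaBase (Fin (2*k)) l a)) = i} : ℤ)
            - (Nat.card {a : α // c (Sum.inl (coronaBase (Fin (2*k)) l a)) = j} : ℤ)) :=
      ih (fun v => c (Sum.inl v)) hc' i j
    have h1 : Nat.card {v : coronaType α (Fin (2*k)) (l+1) // c v = i}
        = Nat.card {x : coronaType α (Fin (2*k)) l // c (Sum.inl x) = i}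
          + k * (Fintype.card (coronaType α (Fin (2*k)) l)
            - Nat.card {x : coronaType α (Fin (2*k)) l // c (Sum.inl x) = i}) :=
      corona_count hk (coronaPow G (cycleGraph (2*k)) l) c hc i
    have h2 : Nat.card {v : coronaType α (Fin (2*k)) (l+1) // c v = j}
        = Nat.card {x : coronaType α (Fin (2*k)) l // c (Sum.inl x) = j}
          + k * (Fintype.card (coronaType α (Fin (2*k)) l)
            - Nat.card {x : coronaType α (Fin (2*k)) l // c (Sum.inl x) = j}) :=
      corona_count hk (coronaPow G (cycleGraph (2*k)) l) c hc j
    have hbi : Nat.card {a : α // c (coronaBase (Fin (2*k)) (l+1) a) = i}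
        = Nat.card {a : α // c (Sum.inl (coronaBase (Fin (2*k)) l a)) = i} := rfl
    have hbj : Nat.card {a : α // c (coronaBase (Fin (2*k)) (l+1) a) = j}
        = Nat.card {a : α // c (Sum.inl (coronaBase (Fin (2*k)) l a)) = j} := rfl
    have hlei : Nat.card {x : coronaType α (Fin (2*k)) l // c (Sum.inl x) = i}
        ≤ Fintype.card (coronaType α (Fin (2*k)) l) := by
      rw [Nat.card_eq_fintype_card]; exact Fintype.card_subtype_le _
    have hlej : Nat.card {x : coronaType α (Fin (2*k)) l // c (Sum.inl x) = j}
        ≤ Fintype.card (coronaType α (Fin (2*k)) l) := by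
      rw [Nat.card_eq_fintype_card]; exact Fintype.card_subtype_le _
    have h1' : (Nat.card {v : coronaType α (Fin (2*k)) (l+1) // c v = i} : ℤ)
        = (Nat.card {x : coronaType α (Fin (2*k)) l // c (Sum.inl x) = i} : ℤ)
          + (k:ℤ) * ((Fintype.card (coronaType α (Fin (2*k)) l) : ℤ)
            - (Nat.card {x : coronaType α (Fin (2*k)) l // c (Sum.inl x) = i} : ℤ)) := by
      have := congrArg (fun t : ℕ => (t : ℤ)) h1
      push_cast [Nat.cast_sub hlei] at this
      exact this
    have h2' : (Nat.card {v : coronaType α (Fin (2*k)) (l+1) // c v = j} : ℤ)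
        = (Nat.card {x : coronaType α (Fin (2*k)) l // c (Sum.inl x) = j} : ℤ)
          + (k:ℤ) * ((Fintype.card (coronaType α (Fin (2*k)) l) : ℤ)
            - (Nat.card {x : coronaType α (Fin (2*k)) l // c (Sum.inl x) = j} : ℤ)) := by
      have := congrArg (fun t : ℕ => (t : ℤ)) h2
      push_cast [Nat.cast_sub hlej] at this
      exact this
    rw [hbi, hbj]
    linear_combination h1' - h2' + (1 - (k:ℤ)) * ih'


private lemma sum_three {γ : Type*} [Fintype γ] (c : γ → Fin 3) :
    (univ.filter fun v => c v = 0).card + (univ.filter fun v => c v = 1).card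
      + (univ.filter fun v => c v = 2).card = Fintype.card γ := by
  have h := Finset.card_eq_sum_card_fiberwise
    (s := (univ : Finset γ)) (t := (univ : Finset (Fin 3))) (f := c) (fun x _ => mem_univ _)
  rw [Fin.sum_univ_three] at h
  rw [← Finset.card_univ, h]

private lemma aux_small {P D T : ℤ} (hP : 2 ≤ P) (hT : -1 ≤ T) (hT' : T ≤ 1)
    (h : T = P * D ∨ T = -(P * D)) : D = 0 := by
  rcases h with h | h <;> rcases lt_trichotomy D 0 with hD | hD | hD <;> nlinarith

/-- If `G` is 3-chromatic on `n` vertices with `3 ∤ n`, `k ≥ 3`, `l ≥ 1`,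
then `G ∘^l C_{2k}` has no equitable 3-coloring; in fact every proper 3-coloring of
`G ∘^l C_{2k}` whose restriction to the base copy of `G` is an equitable 3-coloring of `G`
has two color classes whose cardinalities differ by `(k-1)^l`. -/
theorem coronaPow_evenCycle_not_equitably_three_colorable
    {α : Type} [Fintype α] (G : SimpleGraph α) (n k l : ℕ)
    (hn : Fintype.card α = n) (hndvd : ¬ 3 ∣ n) (hchrom : G.chromaticNumber = 3)
    (hk : 3 ≤ k) (hl : 1 ≤ l) :
    ¬ (coronaPow G (cycleGraph (2 * k)) l).EquitablyColorable 3 ∧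
    ∀ c : coronaType α (Fin (2 * k)) l → Fin 3,
      (∀ ⦃u v⦄, (coronaPow G (cycleGraph (2 * k)) l).Adj u v → c u ≠ c v) →
      G.IsEquitableColoring (fun a => c (coronaBase (Fin (2 * k)) l a)) →
      ∃ i j : Fin 3,
        (Finset.univ.filter fun v => c v = i).card =
          (Finset.univ.filter fun v => c v = j).card + (k - 1) ^ l := by
  have hk1 : (1:ℕ) ≤ k := by omega
  have hkZ : (3:ℤ) ≤ (k:ℤ) := by exact_mod_cast hk
  have hpow : (2:ℤ) ≤ ((k:ℤ)-1)^l := by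
    calc (2:ℤ) ≤ (k:ℤ)-1 := by linarith
      _ ≤ ((k:ℤ)-1)^l := le_self_pow₀ (by linarith) (by omega)
  have hsgn : ∀ D : ℤ, (1 - (k:ℤ))^l * D = ((k:ℤ)-1)^l * D ∨
      (1 - (k:ℤ))^l * D = -(((k:ℤ)-1)^l * D) := by
    intro D
    have hrw : (1 - (k:ℤ))^l = (-1)^l * ((k:ℤ)-1)^l := by
      rw [show (1 - (k:ℤ)) = -((k:ℤ)-1) by ring, neg_pow]
    rcases Nat.even_or_odd l with hp | hp
    · left; rw [hrw, hp.neg_one_pow]; ring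
    · right; rw [hrw, hp.neg_one_pow]; ring
  constructor
  · rintro ⟨c, hprop, heq⟩
    have key := key_count G hk l c hprop
    have keyF : ∀ i j : Fin 3,
        ((Finset.univ.filter fun v => c v = i).card : ℤ)
          - ((Finset.univ.filter fun v => c v = j).card : ℤ)
        = (1 - (k:ℤ))^l
          * ((Nat.card {a : α // c (coronaBase (Fin (2*k)) l a) = i} : ℤ)
            - (Nat.card {a : α // c (coronaBase (Fin (2*k)) l a) = j} : ℤ)) := by
      intro i j
      rw [cnt_eq, cnt_eq]
      exact key i j
    have hBeq : ∀ i j : Fin 3,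
        (Nat.card {a : α // c (coronaBase (Fin (2*k)) l a) = i} : ℤ)
          = (Nat.card {a : α // c (coronaBase (Fin (2*k)) l a) = j} : ℤ) := by
      intro i j
      have hT1 := heq i j
      have hT2 := heq j i
      have habs1 : ((Finset.univ.filter fun v => c v = i).card : ℤ)
          - ((Finset.univ.filter fun v => c v = j).card : ℤ) ≤ 1 := by
        have : ((Finset.univ.filter fun v => c v = i).card : ℤ)
            ≤ ((Finset.univ.filter fun v => c v = j).card : ℤ) + 1 := by exact_mod_cast hT1
        linarith
      have habs2 : -1 ≤ ((Finset.univ.filter fun v => c v = i).card : ℤ)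
          - ((Finset.univ.filter fun v => c v = j).card : ℤ) := by
        have : ((Finset.univ.filter fun v => c v = j).card : ℤ)
            ≤ ((Finset.univ.filter fun v => c v = i).card : ℤ) + 1 := by exact_mod_cast hT2
        linarith
      have hD := aux_small hpow habs2 habs1
        (by rw [keyF i j]; exact hsgn _)
      linarith
    have hsum : (univ.filter fun a : α => c (coronaBase (Fin (2*k)) l a) = 0).card
        + (univ.filter fun a : α => c (coronaBase (Fin (2*k)) l a) = 1).card
        + (univ.filter fun a : α => c (coronaBase (Fin (2*k)) l a) = 2).card
        = Fintype.card α := sum_three _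
    have e01 := hBeq 0 1
    have e02 := hBeq 0 2
    rw [cnt_eq (fun a : α => c (coronaBase (Fin (2*k)) l a) = 0),
        cnt_eq (fun a : α => c (coronaBase (Fin (2*k)) l a) = 1),
        cnt_eq (fun a : α => c (coronaBase (Fin (2*k)) l a) = 2)] at hsum
    rw [hn] at hsum
    exact hndvd (by omega)
  · intro c hprop hbase
    have key := key_count G hk l c hprop
    have keyF : ∀ i j : Fin 3,
        ((Finset.univ.filter fun v => c v = i).card : ℤ)
          - ((Finset.univ.filter fun v => c v = j).card : ℤ)
        = (1 - (k:ℤ))^l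
          * ((Nat.card {a : α // c (coronaBase (Fin (2*k)) l a) = i} : ℤ)
            - (Nat.card {a : α // c (coronaBase (Fin (2*k)) l a) = j} : ℤ)) := by
      intro i j
      rw [cnt_eq, cnt_eq]
      exact key i j
    have hb : ∀ i j : Fin 3,
        Nat.card {a : α // c (coronaBase (Fin (2*k)) l a) = i}
          ≤ Nat.card {a : α // c (coronaBase (Fin (2*k)) l a) = j} + 1 := by
      intro i j
      have h := hbase.2 i j
      rw [cnt_eq (fun a : α => c (coronaBase (Fin (2*k)) l a) = i),
          cnt_eq (fun a : α => c (coronaBase (Fin (2*k)) l a) = j)] at h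
      exact h
    have hsum : Nat.card {a : α // c (coronaBase (Fin (2*k)) l a) = 0}
        + Nat.card {a : α // c (coronaBase (Fin (2*k)) l a) = 1}
        + Nat.card {a : α // c (coronaBase (Fin (2*k)) l a) = 2} = n := by
      have h := sum_three (fun a : α => c (coronaBase (Fin (2*k)) l a))
      rw [cnt_eq (fun a : α => c (coronaBase (Fin (2*k)) l a) = 0),
          cnt_eq (fun a : α => c (coronaBase (Fin (2*k)) l a) = 1),
          cnt_eq (fun a : α => c (coronaBase (Fin (2*k)) l a) = 2), hn] at h
      exact h
    have hex : ∃ i j : Fin 3,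
        Nat.card {a : α // c (coronaBase (Fin (2*k)) l a) = i}
          = Nat.card {a : α // c (coronaBase (Fin (2*k)) l a) = j} + 1 := by
      by_contra hcon
      push_neg at hcon
      have h01 := hb 0 1
      have h10 := hb 1 0
      have h02 := hb 0 2
      have h20 := hb 2 0
      have h12 := hb 1 2
      have h21 := hb 2 1
      have n01 := hcon 0 1
      have n10 := hcon 1 0
      have n02 := hcon 0 2
      have n20 := hcon 2 0
      have n12 := hcon 1 2
      have n21 := hcon 2 1
      exact hndvd (by omega)
    obtain ⟨i, j, hij⟩ := hex
    have hDij : (Nat.card {a : α // c (coronaBase (Fin (2*k)) l a) = i} : ℤ)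
        - (Nat.card {a : α // c (coronaBase (Fin (2*k)) l a) = j} : ℤ) = 1 := by
      rw [hij]; push_cast; ring
    have hK : (((k-1)^l : ℕ) : ℤ) = ((k:ℤ) - 1)^l := by
      rw [Nat.cast_pow, Nat.cast_sub hk1, Nat.cast_one]
    have hmain := keyF i j
    rw [hDij] at hmain
    rcases hsgn 1 with hs | hs <;> rw [hs] at hmain
    · refine ⟨i, j, ?_⟩
      have hz : ((Finset.univ.filter fun v => c v = i).card : ℤ)
          = ((Finset.univ.filter fun v => c v = j).card : ℤ) + (((k-1)^l : ℕ) : ℤ) := by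
        rw [hK]; linarith
      exact_mod_cast hz
    · refine ⟨j, i, ?_⟩
      have hz : ((Finset.univ.filter fun v => c v = j).card : ℤ)
          = ((Finset.univ.filter fun v => c v = i).card : ℤ) + (((k-1)^l : ℕ) : ℤ) := by
        rw [hK]; linarith
      exact_mod_cast hz
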